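/- arXiv:2502.01831 — 3 statements merged into one kernel-verified Lean document; each statement's English description precedes it below -/
import Mathlib

section
/- For every α > 0, the sum over all monotone non-decreasing finite integer sequences (t₁,…,t_N) of e^{-α·Σ|t_j|} is at most C_α := (1-e^{-α})^{-1} · (∏_{n=1}^∞ (1-e^{-αn})^{-1})², uniformly in N. -/
set_option maxHeartbeats 800000

open Real

/-- Splitting a monotone sequence of length `N+1` into its head and the (shifted) tail. -/
noncomputable def monoSuccEquiv (N : ℕ) :
    {f : Fin (N+1) → ℕ // Monotone f} ≃ ℕ × {f : Fin N → ℕ // Monotone f} where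
  toFun f := (f.1 0, ⟨fun j => f.1 j.succ - f.1 0, by
    intro a b hab
    exact Nat.sub_le_sub_right (f.2 (Fin.succ_le_succ_iff.mpr hab)) _⟩)
  invFun p := ⟨Fin.cons p.1 (fun j => p.1 + p.2.1 j), by
    intro a b hab
    induction a using Fin.cases with
    | zero =>
      induction b using Fin.cases with
      | zero => exact le_rfl
      | succ j => simp only [Fin.cons_zero, Fin.cons_succ]; exact Nat.le_add_right _ _
    | succ i =>
      induction b using Fin.cases with
      | zero => exact absurd hab (by simp [Fin.le_def])
      | succ j =>
        simp only [Fin.cons_succ]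
        exact Nat.add_le_add_left (p.2.2 (Fin.succ_le_succ_iff.mp hab)) _⟩
  left_inv f := by
    apply Subtype.ext
    funext j
    induction j using Fin.cases with
    | zero => simp
    | succ i => simpa using Nat.add_sub_cancel' (f.2 (Fin.zero_le _))
  right_inv p := by
    refine Prod.ext (by simp) (Subtype.ext (funext fun j => by simp))

theorem natS {q : ℝ} (hq0 : 0 ≤ q) (hq1 : q < 1) (N : ℕ) :
    Summable (fun g : {f : Fin N → ℕ // Monotone f} => q ^ (∑ j, g.1 j)) ∧
    ∑' g : {f : Fin N → ℕ // Monotone f}, q ^ (∑ j, g.1 j)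
      = ∏ k ∈ Finset.range N, (1 - q ^ (k+1))⁻¹ := by
  induction N with
  | zero =>
    haveI : Unique {f : Fin 0 → ℕ // Monotone f} :=
      ⟨⟨⟨fun j => j.elim0, fun a => a.elim0⟩⟩, fun f => Subtype.ext (funext fun j => j.elim0)⟩
    constructor
    · exact Summable.of_finite
    · rw [tsum_eq_single default (fun b hb => absurd (Unique.uniq _ b) hb)]
      simp
  | succ N ih =>
    have key : ∀ p : ℕ × {f : Fin N → ℕ // Monotone f},
        q ^ (∑ j, ((monoSuccEquiv N).symm p).1 j) = (q ^ (N+1)) ^ p.1 * q ^ (∑ j, p.2.1 j) := by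
      rintro ⟨m, g⟩
      rw [← pow_mul, ← pow_add]
      congr 1
      simp only [monoSuccEquiv, Equiv.coe_fn_symm_mk, Fin.sum_univ_succ, Fin.cons_zero,
        Fin.cons_succ, Finset.sum_add_distrib, Finset.sum_const, Finset.card_univ,
        Fintype.card_fin, smul_eq_mul]
      ring
    have hgeo : Summable (fun m : ℕ => (q ^ (N+1)) ^ m) :=
      summable_geometric_of_lt_one (pow_nonneg hq0 _) (pow_lt_one₀ hq0 hq1 (Nat.succ_ne_zero N))
    have hmul : Summable (fun p : ℕ × {f : Fin N → ℕ // Monotone f} =>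
        (q ^ (N+1)) ^ p.1 * q ^ (∑ j, p.2.1 j)) :=
by
      apply Summable.mul_of_nonneg hgeo ih.1
      · intro m; exact pow_nonneg (pow_nonneg hq0 _) _
      · intro g; exact pow_nonneg hq0 _
    have hsum : Summable (fun g : {f : Fin (N+1) → ℕ // Monotone f} => q ^ (∑ j, g.1 j)) := by
      rw [← (monoSuccEquiv N).symm.summable_iff]
      exact hmul.congr (fun p => (key p).symm)
    refine ⟨hsum, ?_⟩
    rw [← (monoSuccEquiv N).symm.tsum_eq, tsum_congr key,
      ← Summable.tsum_mul_tsum hgeo ih.1 hmul,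
      tsum_geometric_of_lt_one (pow_nonneg hq0 _) (pow_lt_one₀ hq0 hq1 (Nat.succ_ne_zero N)),
      ih.2, Finset.prod_range_succ, Nat.succ_eq_add_one]
    ring

theorem prodFacts {q : ℝ} (hq0 : 0 < q) (hq1 : q < 1) :
    1 ≤ (∏' n : ℕ, (1 - q ^ (n+1))⁻¹) ∧
    ∀ N, ∏ k ∈ Finset.range N, (1 - q ^ (k+1))⁻¹ ≤ ∏' n : ℕ, (1 - q ^ (n+1))⁻¹ := by
  have h1 : ∀ n : ℕ, 0 < 1 - q ^ (n+1) := fun n => by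
    have h := pow_lt_one₀ hq0.le hq1 (Nat.succ_ne_zero n)
    rw [Nat.succ_eq_add_one] at h
    linarith
  have hone : ∀ n : ℕ, 1 ≤ (1 - q ^ (n+1))⁻¹ := fun n =>
    one_le_inv₀ (h1 n) |>.mpr (by have := pow_pos hq0 (n+1); linarith)
  have hlognn : ∀ n : ℕ, 0 ≤ Real.log ((1 - q ^ (n+1))⁻¹) := fun n => Real.log_nonneg (hone n)
  have hlog : Summable (fun n : ℕ => Real.log ((1 - q ^ (n+1))⁻¹)) := by
    have hmaj : Summable (fun n : ℕ => ((1 - q)⁻¹ * q) * q ^ n) :=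
      (summable_geometric_of_lt_one hq0.le hq1).mul_left _
    apply Summable.of_nonneg_of_le hlognn _ hmaj
    intro n
    have hq' : q ^ (n+1) ≤ q := by
      calc q ^ (n+1) ≤ q ^ 1 := pow_le_pow_of_le_one hq0.le hq1.le (by omega)
      _ = q := pow_one q
    have hle : (1 - q ^ (n+1))⁻¹ ≤ (1 - q)⁻¹ := by
      apply inv_anti₀ (by linarith)
      linarith
    have hid : (1 - q ^ (n+1)) * (1 - q ^ (n+1))⁻¹ = 1 := mul_inv_cancel₀ (ne_of_gt (h1 n))
    have hxnn : (0:ℝ) ≤ q ^ (n+1) := pow_nonneg hq0.le _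
    have step : (1 - q ^ (n+1))⁻¹ - 1 ≤ (1-q)⁻¹ * q * q ^ n := by
      have h2 : q ^ (n+1) * (1 - q ^ (n+1))⁻¹ ≤ q ^ (n+1) * (1-q)⁻¹ :=
        mul_le_mul_of_nonneg_left hle hxnn
      have h3 : (1-q)⁻¹ * q * q ^ n = q ^ (n+1) * (1-q)⁻¹ := by ring
      rw [h3]
      nlinarith [hid, h2]
    exact le_trans (Real.log_le_sub_one_of_pos (inv_pos.mpr (h1 n))) step
  have htp : Real.exp (∑' n : ℕ, Real.log ((1 - q ^ (n+1))⁻¹))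
      = ∏' n : ℕ, (1 - q ^ (n+1))⁻¹ := by
    have := Real.rexp_tsum_eq_tprod (f := fun n => (1 - q ^ (n+1))⁻¹)
      (fun n => inv_pos.mpr (h1 n)) hlog
    simpa using this
  constructor
  · rw [← htp]
    exact Real.one_le_exp (tsum_nonneg hlognn)
  · intro N
    rw [← htp]
    have hfin : ∏ k ∈ Finset.range N, (1 - q ^ (k+1))⁻¹
        = Real.exp (∑ k ∈ Finset.range N, Real.log ((1 - q ^ (k+1))⁻¹)) := by
      rw [Real.exp_sum]
      exact Finset.prod_congr rfl fun k _ =>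
        (Real.exp_log (inv_pos.mpr (h1 k))).symm
    rw [hfin]
    exact Real.exp_le_exp.mpr (Summable.sum_le_tsum _ (fun n _ => hlognn n) hlog)

/-- Splitting a monotone integer sequence into the (reversed) negative part and the
nonnegative part, both monotone sequences of naturals. -/
def splitMap (N : ℕ) (t : {f : Fin N → ℤ // Monotone f}) :
    {f : Fin N → ℕ // Monotone f} × {f : Fin N → ℕ // Monotone f} :=
  (⟨fun j => (-(t.1 j.rev)).toNat, by
      intro a b hab
      apply Int.toNat_le_toNat
      simp only [neg_le_neg_iff]
      exact t.2 (Fin.rev_le_rev.mpr hab)⟩,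
   ⟨fun j => (t.1 j).toNat, fun a b hab => Int.toNat_le_toNat (t.2 hab)⟩)

theorem splitMap_injective (N : ℕ) : Function.Injective (splitMap N) := by
  intro t s h
  apply Subtype.ext; funext j
  have h1 := congrFun (congrArg (fun u => (u.1.1 : Fin N → ℕ)) h) j.rev
  have h2 := congrFun (congrArg (fun u => (u.2.1 : Fin N → ℕ)) h) j
  simp only [splitMap, Fin.rev_rev] at h1 h2
  omega

theorem splitMap_weight {q : ℝ} (N : ℕ) (t : {f : Fin N → ℤ // Monotone f}) :
    q ^ (∑ j, (t.1 j).natAbs)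
      = q ^ (∑ j, ((splitMap N t).1.1 j)) * q ^ (∑ j, ((splitMap N t).2.1 j)) := by
  rw [← pow_add]
  congr 1
  have hrev : ∑ j : Fin N, (-(t.1 j.rev)).toNat = ∑ j : Fin N, (-(t.1 j)).toNat :=
    Fintype.sum_bijective Fin.rev Fin.rev_bijective _ _ (fun j => rfl)
  simp only [splitMap]
  rw [hrev, ← Finset.sum_add_distrib]
  exact Finset.sum_congr rfl fun j _ => by omega

/-- The constant `C_α = (1-e^{-α})⁻¹ (∏_{n=1}^∞ (1-e^{-αn})^{-1})²`. -/
noncomputable def Calpha (α : ℝ) : ℝ :=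
  (1 - Real.exp (-α))⁻¹ * (∏' n : ℕ, (1 - Real.exp (-α * (n + 1)))⁻¹) ^ 2

/-- For every `α > 0`, the sum over all monotone non-decreasing finite integer sequences
`(t₁,…,t_N)` of `e^{-α Σ|t_j|}` is at most `C_α`, uniformly in `N`. -/
theorem monotone_sequences_exp_sum_bound (α : ℝ) (hα : 0 < α) (N : ℕ) :
    ∑' t : { f : Fin N → ℤ // Monotone f },
      Real.exp (-α * ∑ j : Fin N, |((t.1 j : ℝ))|) ≤ Calpha α := by
  set q : ℝ := Real.exp (-α) with hqdef
  have hq0 : 0 < q := Real.exp_pos _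
  have hq1 : q < 1 := Real.exp_lt_one_iff.mpr (by linarith)
  -- rewrite the summand as a power of `q`
  have hFeq : ∀ t : { f : Fin N → ℤ // Monotone f },
      Real.exp (-α * ∑ j : Fin N, |((t.1 j : ℝ))|) = q ^ (∑ j, (t.1 j).natAbs) := by
    intro t
    have hcast : (∑ j : Fin N, |((t.1 j : ℝ))|) = ((∑ j, (t.1 j).natAbs : ℕ) : ℝ) := by
      push_cast [Nat.cast_natAbs]
      simp [Int.cast_abs]
    rw [hcast, mul_comm, Real.exp_nat_mul]
  obtain ⟨hS, hSeq⟩ := natS hq0.le hq1 N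
  obtain ⟨hP1, hPle⟩ := prodFacts hq0 hq1
  have hGsum : Summable (fun p : {f : Fin N → ℕ // Monotone f} × {f : Fin N → ℕ // Monotone f} =>
      q ^ (∑ j, p.1.1 j) * q ^ (∑ j, p.2.1 j)) := by
    apply Summable.mul_of_nonneg hS hS
    · intro x; exact pow_nonneg hq0.le _
    · intro x; exact pow_nonneg hq0.le _
  have hFsum : Summable (fun t : { f : Fin N → ℤ // Monotone f } =>
      q ^ (∑ j, (t.1 j).natAbs)) :=
    (hGsum.comp_injective (splitMap_injective N)).congr
      (fun t => (splitMap_weight N t).symm)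
  have hprodnn : 0 ≤ ∏ k ∈ Finset.range N, (1 - q ^ (k+1))⁻¹ :=
    Finset.prod_nonneg fun k _ => inv_nonneg.mpr (by
      have h := pow_lt_one₀ hq0.le hq1 (Nat.succ_ne_zero k)
      rw [Nat.succ_eq_add_one] at h
      linarith)
  have hPnn : (0:ℝ) ≤ ∏' n : ℕ, (1 - q ^ (n+1))⁻¹ := le_trans zero_le_one hP1
  have hCal : Calpha α = (1 - q)⁻¹ * (∏' n : ℕ, (1 - q ^ (n+1))⁻¹) ^ 2 := by
    unfold Calpha
    rw [← hqdef]
    congr 2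
    apply tprod_congr
    intro n
    congr 2
    rw [← Real.exp_nat_mul]
    push_cast
    ring_nf
  calc ∑' t : { f : Fin N → ℤ // Monotone f },
        Real.exp (-α * ∑ j : Fin N, |((t.1 j : ℝ))|)
      = ∑' t : { f : Fin N → ℤ // Monotone f }, q ^ (∑ j, (t.1 j).natAbs) := tsum_congr hFeq
    _ ≤ ∑' p : {f : Fin N → ℕ // Monotone f} × {f : Fin N → ℕ // Monotone f},
          q ^ (∑ j, p.1.1 j) * q ^ (∑ j, p.2.1 j) := by
        apply Summable.tsum_le_tsum_of_inj (splitMap N) (splitMap_injective N)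
          (fun c _ => mul_nonneg (pow_nonneg hq0.le _) (pow_nonneg hq0.le _))
          (fun t => le_of_eq (splitMap_weight N t)) hFsum hGsum
    _ = (∏ k ∈ Finset.range N, (1 - q ^ (k+1))⁻¹) * (∏ k ∈ Finset.range N, (1 - q ^ (k+1))⁻¹) := by
        rw [← Summable.tsum_mul_tsum hS hS hGsum, hSeq]
    _ ≤ (∏' n : ℕ, (1 - q ^ (n+1))⁻¹) * (∏' n : ℕ, (1 - q ^ (n+1))⁻¹) :=
        mul_le_mul (hPle N) (hPle N) hprodnn hPnn
    _ = (∏' n : ℕ, (1 - q ^ (n+1))⁻¹) ^ 2 := (sq _).symm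
    _ ≤ (1 - q)⁻¹ * (∏' n : ℕ, (1 - q ^ (n+1))⁻¹) ^ 2 := by
        apply le_mul_of_one_le_left (sq_nonneg _)
        exact (one_le_inv₀ (by linarith)).mpr (by nlinarith)
    _ = Calpha α := hCal.symm
end

section
/- Let N ≥ 1, 1 ≤ k ≤ N, and α > 0. Then for every x ∈ P_{N,k}(ℤ), the sum over all y ∈ P_N(ℤ) of e^{-α|x−y|₁} is at most C_α^k, where C_α = (1-e^{-α})^{-1}(∏_{n=1}^∞(1-e^{-αn})^{-1})². -/
open Real

/-- Number of clusters (maximal runs of consecutive integers) of a finite subset of `ℤ`,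
counted via its right endpoints. -/
def numClusters (x : Finset ℤ) : ℕ := (x.filter fun i => i + 1 ∉ x).card

/-- The `ℓ¹` distance `|x − y|₁ = Σ_{i=1}^N |x_i − y_i|` between two `N`-element subsets of `ℤ`,
using their increasing enumerations. -/
noncomputable def dOne (N : ℕ) (x y : Finset ℤ) (hx : x.card = N) (hy : y.card = N) : ℝ :=
  ∑ i : Fin N, |(((x.orderIsoOfFin hx i : ℤ) : ℝ)) - (((y.orderIsoOfFin hy i : ℤ) : ℝ))|

section Auxiliary

open Finset

namespace ClusterAux

variable {N : ℕ} (m : Fin N → Prop) [DecidablePred m]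

/-- `clP m j i` means `j ≤ i` and there is no mark in `[j, i)`. -/
def clP (j i : Fin N) : Prop := j ≤ i ∧ ∀ l, j ≤ l → l < i → ¬ m l

instance (j i : Fin N) : Decidable (clP m j i) :=
  inferInstanceAs (Decidable (_ ∧ _))

/-- number of `j ≤ i` in the same cluster as `i`. -/
def Rwt (i : Fin N) : ℕ := (univ.filter fun j => clP m j i).card

/-- encoding of a clusterwise antitone sequence via its increments. -/
def enc (hm : ∀ i, ¬ m i → i.val + 1 < N) (a : Fin N → ℕ) : Fin N → ℕ :=
  fun i => if h : m i then a i else a i - a ⟨i.val + 1, hm i h⟩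

lemma revind {P : Fin N → Prop}
    (step : ∀ i : Fin N, (∀ h : i.val + 1 < N, P ⟨i.val + 1, h⟩) → P i) : ∀ i, P i := by
  have key : ∀ t (i : Fin N), N - i.val ≤ t → P i := by
    intro t
    induction t with
    | zero => intro i hi; have := i.isLt; omega
    | succ t IH =>
      intro i hi
      exact step i fun h => IH ⟨i.val + 1, h⟩ (by simp only []; omega)
  exact fun i => key N i (by omega)

omit [DecidablePred m] in
lemma clP_self (i : Fin N) : clP m i i :=
  ⟨le_rfl, fun _ h1 h2 => absurd (h1.trans_lt h2) (lt_irrefl _)⟩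

variable (hm : ∀ i, ¬ m i → i.val + 1 < N)

lemma enc_inj {a a' : Fin N → ℕ}
    (ha : ∀ i, ∀ h : ¬ m i, a ⟨i.val + 1, hm i h⟩ ≤ a i)
    (ha' : ∀ i, ∀ h : ¬ m i, a' ⟨i.val + 1, hm i h⟩ ≤ a' i)
    (hee : enc m hm a = enc m hm a') : a = a' := by
  funext i
  refine revind (P := fun i => a i = a' i) (fun i IH => ?_) i
  have h2 := congrFun hee i
  by_cases h : m i
  · simpa [enc, h] using h2
  · have hlt := hm i h
    have IH' := IH hlt
    simp only [enc, dif_neg h] at h2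
    have e1 := ha i h
    have e2 := ha' i h
    omega

lemma sum_a_eq {a : Fin N → ℕ}
    (ha : ∀ i, ∀ h : ¬ m i, a ⟨i.val + 1, hm i h⟩ ≤ a i) :
    ∀ j, a j = ∑ i ∈ univ.filter fun i => clP m j i, enc m hm a i := by
  refine revind (fun j IH => ?_)
  by_cases h : m j
  · have hfil : (univ.filter fun i => clP m j i) = {j} := by
      ext i
      simp only [mem_filter, mem_univ, true_and, mem_singleton]
      constructor
      · rintro ⟨hle, hall⟩
        by_contra hne
        have hlt : j < i := lt_of_le_of_ne hle (by exact fun hh => hne hh.symm)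
        exact hall j le_rfl hlt h
      · rintro rfl; exact clP_self m i
    rw [hfil, Finset.sum_singleton, enc, dif_pos h]
  · have hlt := hm j h
    set j' : Fin N := ⟨j.val + 1, hlt⟩ with hj'
    have hfil : (univ.filter fun i => clP m j i)
        = insert j (univ.filter fun i => clP m j' i) := by
      ext i
      simp only [mem_filter, mem_univ, true_and, mem_insert]
      constructor
      · rintro ⟨hle, hall⟩
        by_cases hne : i = j
        · exact Or.inl hne
        · refine Or.inr ⟨?_, fun l hl1 hl2 => hall l ?_ hl2⟩
          · have : j < i := lt_of_le_of_ne hle (fun hh => hne hh.symm)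
            rw [Fin.le_def]; rw [Fin.lt_def] at this; simpa [hj'] using this
          · refine le_trans ?_ hl1
            rw [Fin.le_def]; simp [hj']
      · rintro (rfl | ⟨hle, hall⟩)
        · exact clP_self m i
        · refine ⟨le_trans (by rw [Fin.le_def]; simp [hj']) hle, fun l hl1 hl2 => ?_⟩
          by_cases hlj : l = j
          · subst hlj; exact h
          · refine hall l ?_ hl2
            have : j < l := lt_of_le_of_ne hl1 (fun hh => hlj hh.symm)
            rw [Fin.le_def]; rw [Fin.lt_def] at this; simpa [hj'] using this
    have hnotmem : j ∉ (univ.filter fun i => clP m j' i) := by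
      simp only [mem_filter, mem_univ, true_and]
      rintro ⟨hle, -⟩
      rw [Fin.le_def] at hle; simp [hj'] at hle
    rw [hfil, Finset.sum_insert hnotmem, ← IH hlt]
    have : enc m hm a j = a j - a j' := by rw [enc, dif_neg h]
    rw [this]
    have hineq : a j' ≤ a j := ha j h
    have hre : a (⟨j.val + 1, hlt⟩ : Fin N) = a j' := rfl
    omega

lemma sum_total {a : Fin N → ℕ}
    (ha : ∀ i, ∀ h : ¬ m i, a ⟨i.val + 1, hm i h⟩ ≤ a i) :
    ∑ j, a j = ∑ i, Rwt m i * enc m hm a i := by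
  calc ∑ j, a j = ∑ j, ∑ i ∈ univ.filter fun i => clP m j i, enc m hm a i :=
        Finset.sum_congr rfl fun j _ => sum_a_eq m hm ha j
    _ = ∑ j : Fin N, ∑ i : Fin N, if clP m j i then enc m hm a i else 0 := by
        simp [Finset.sum_filter]
    _ = ∑ i : Fin N, ∑ j : Fin N, if clP m j i then enc m hm a i else 0 := Finset.sum_comm
    _ = ∑ i, Rwt m i * enc m hm a i := by
        refine Finset.sum_congr rfl fun i _ => ?_
        rw [← Finset.sum_filter, Finset.sum_const, smul_eq_mul, Rwt]

lemma one_le_Rwt (i : Fin N) : 1 ≤ Rwt m i := by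
  have : i ∈ univ.filter fun j => clP m j i := by simp [clP_self]
  exact Finset.card_pos.mpr ⟨i, this⟩

lemma Rwt_le (i : Fin N) : Rwt m i ≤ N := by
  simpa [Rwt] using Finset.card_le_card (Finset.subset_univ (univ.filter fun j => clP m j i))

include hm in
lemma card_fiber_le (v : ℕ) :
    (univ.filter fun i => Rwt m i = v).card ≤ (univ.filter fun i => m i).card := by
  rcases Nat.eq_zero_or_pos N with hN | hN
  · subst hN
    simp [Finset.filter_eq_empty_iff.mpr (fun (i : Fin 0) _ => i.elim0)]
  · have hlast : ∀ i : Fin N, (univ.filter fun l => i ≤ l ∧ m l).Nonempty := by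
      intro i
      refine ⟨⟨N - 1, by omega⟩, ?_⟩
      have hm' : m ⟨N - 1, by omega⟩ := by
        by_contra hc
        have := hm _ hc
        simp at this; omega
      simp only [mem_filter, mem_univ, true_and]
      exact ⟨by rw [Fin.le_def]; have := i.isLt; simp; omega, hm'⟩
    set E : Fin N → Fin N := fun i => (univ.filter fun l => i ≤ l ∧ m l).min' (hlast i) with hE
    have hEmem : ∀ i, i ≤ E i ∧ m (E i) := by
      intro i
      have := Finset.min'_mem _ (hlast i)
      simpa only [mem_filter, mem_univ, true_and] using this
    have hElow : ∀ i l, i ≤ l → l < E i → ¬ m l := by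
      intro i l h1 h2 hml
      have : E i ≤ l := Finset.min'_le _ _ (by simp [h1, hml])
      exact absurd (this.trans_lt h2) (lt_irrefl _)
    have hkey : ∀ i i', Rwt m i = v → Rwt m i' = v → E i = E i' → i ≤ i' → i = i' := by
      intro i i' hri hri' hEE hle
      by_contra hne
      have hlt : i < i' := lt_of_le_of_ne hle hne
      have hsub : insert i' (univ.filter fun j => clP m j i)
          ⊆ (univ.filter fun j => clP m j i') := by
        intro j hj
        rcases Finset.mem_insert.mp hj with rfl | hj
        · simp [clP_self]
        · simp only [mem_filter, mem_univ, true_and] at hj ⊢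
          obtain ⟨hle2, hall⟩ := hj
          refine ⟨hle2.trans hlt.le, fun l h1 h2 => ?_⟩
          rcases lt_or_ge l i with hc | hc
          · exact hall l h1 hc
          · refine hElow i l hc ?_
            rw [hEE]
            exact h2.trans_le (hEmem i').1
      have hni : i' ∉ (univ.filter fun j => clP m j i) := by
        simp only [mem_filter, mem_univ, true_and]
        rintro ⟨hle2, -⟩
        exact absurd (hle2.trans_lt hlt) (lt_irrefl _)
      have hc1 := Finset.card_le_card hsub
      rw [Finset.card_insert_of_notMem hni] at hc1
      have : Rwt m i + 1 ≤ Rwt m i' := hc1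
      omega
    refine Finset.card_le_card_of_injOn E (fun i hi => ?_) ?_
    · simp only [Finset.coe_filter, mem_filter, mem_univ, true_and, Set.mem_setOf_eq] at hi ⊢
      exact (hEmem i).2
    · intro i hi i' hi' hEE
      simp only [Finset.coe_filter, Set.mem_setOf_eq, mem_univ, true_and] at hi hi'
      rcases le_total i i' with h | h
      · exact hkey i i' hi hi' hEE h
      · exact (hkey i' i hi' hi hEE.symm h).symm

/-- the reversed cluster-start marking. -/
def m2Of : Fin N → Prop := fun i =>
  i.rev.val = 0 ∨ m ⟨i.rev.val - 1, Nat.lt_of_le_of_lt (Nat.sub_le _ _) i.rev.isLt⟩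

instance : DecidablePred (m2Of m) := fun _ => inferInstanceAs (Decidable (_ ∨ _))

omit [DecidablePred m] in
lemma hm2Of (i : Fin N) (h : ¬ m2Of m i) : i.val + 1 < N := by
  rw [m2Of] at h
  push_neg at h
  have h1 := h.1
  have h2 : i.rev.val = N - (i.val + 1) := by simp [Fin.val_rev]
  have := i.isLt
  omega

include hm in
lemma card_m2Of_le :
    (univ.filter fun i => m2Of m i).card ≤ (univ.filter fun i => m i).card := by
  rcases Nat.eq_zero_or_pos N with hN | hN
  · subst hN
    simp [Finset.filter_eq_empty_iff.mpr (fun (i : Fin 0) _ => i.elim0)]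
  · have hlast : ∀ i : Fin N, (univ.filter fun l => i ≤ l ∧ m l).Nonempty := by
      intro i
      refine ⟨⟨N - 1, by omega⟩, ?_⟩
      have hm' : m ⟨N - 1, by omega⟩ := by
        by_contra hc
        have := hm _ hc
        simp at this; omega
      simp only [mem_filter, mem_univ, true_and]
      exact ⟨by rw [Fin.le_def]; have := i.isLt; simp; omega, hm'⟩
    set E : Fin N → Fin N := fun i => (univ.filter fun l => i ≤ l ∧ m l).min' (hlast i) with hE
    have hEmem : ∀ i, i ≤ E i ∧ m (E i) := by
      intro i
      have := Finset.min'_mem _ (hlast i)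
      simpa only [mem_filter, mem_univ, true_and] using this
    have hElow : ∀ i l, i ≤ l → l < E i → ¬ m l := by
      intro i l h1 h2 hml
      have : E i ≤ l := Finset.min'_le _ _ (by simp [h1, hml])
      exact absurd (this.trans_lt h2) (lt_irrefl _)
    have hkey : ∀ s s' : Fin N, s < s' →
        (s'.val = 0 ∨ m ⟨s'.val - 1, Nat.lt_of_le_of_lt (Nat.sub_le _ _) s'.isLt⟩) →
        E s = E s' → False := by
      intro s s' hlt hmark hEE
      have hs'0 : s'.val ≠ 0 := by
        rw [Fin.lt_def] at hlt; omega
      have hmk : m ⟨s'.val - 1, Nat.lt_of_le_of_lt (Nat.sub_le _ _) s'.isLt⟩ := by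
        rcases hmark with h | h
        · exact absurd h hs'0
        · exact h
      refine hElow s ⟨s'.val - 1, Nat.lt_of_le_of_lt (Nat.sub_le _ _) s'.isLt⟩ ?_ ?_ hmk
      · rw [Fin.le_def]; rw [Fin.lt_def] at hlt; simp; omega
      · have h1 : (⟨s'.val - 1, Nat.lt_of_le_of_lt (Nat.sub_le _ _) s'.isLt⟩ : Fin N) < s' := by
          rw [Fin.lt_def]; simp; omega
        have h2 : s' ≤ E s' := (hEmem s').1
        rw [hEE]
        exact h1.trans_le h2
    refine Finset.card_le_card_of_injOn (fun i => E i.rev) (fun i hi => ?_) ?_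
    · simp only [Finset.coe_filter, mem_filter, mem_univ, true_and, Set.mem_setOf_eq] at hi ⊢
      exact (hEmem i.rev).2
    · intro i hi i' hi' hEE
      simp only [Finset.coe_filter, Set.mem_setOf_eq, mem_univ, true_and] at hi hi'
      rw [← Fin.rev_inj]
      rcases lt_trichotomy i.rev i'.rev with h | h | h
      · exact absurd (hkey i.rev i'.rev h hi' hEE) (fun f => f)
      · exact h
      · exact absurd (hkey i'.rev i.rev h hi hEE.symm) (fun f => f)

end ClusterAux

section TsumLemmas

open ENNReal

lemma tsum_pi_pow (n : ℕ) (z : Fin n → ℝ≥0∞) :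
    ∑' u : Fin n → ℕ, ∏ i, z i ^ u i = ∏ i, (1 - z i)⁻¹ := by
  induction n with
  | zero =>
    rw [tsum_eq_single (fun _ => 0) (fun b hb => absurd (funext fun i => i.elim0) hb)]
    simp
  | succ n IH =>
    rw [← Equiv.tsum_eq (Fin.consEquiv (fun _ => ℕ))]
    have hval : ∀ p : ℕ × (Fin n → ℕ), ∏ i, z i ^ ((Fin.consEquiv (fun _ => ℕ)) p) i
        = z 0 ^ p.1 * ∏ i : Fin n, (z i.succ) ^ (p.2 i) := by
      intro p
      rw [Fin.prod_univ_succ]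
      simp [Fin.consEquiv]
    calc ∑' p : ℕ × (Fin n → ℕ), ∏ i, z i ^ ((Fin.consEquiv (fun _ => ℕ)) p) i
        = ∑' (a : ℕ) (b : Fin n → ℕ), z 0 ^ a * ∏ i : Fin n, (z i.succ) ^ (b i) := by
          rw [ENNReal.tsum_prod']
          exact tsum_congr fun a => tsum_congr fun b => hval (a, b)
      _ = (∑' a : ℕ, z 0 ^ a) * ∑' b : Fin n → ℕ, ∏ i : Fin n, (z i.succ) ^ (b i) := by
          rw [← ENNReal.tsum_mul_right]
          exact tsum_congr fun a => ENNReal.tsum_mul_left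
      _ = (1 - z 0)⁻¹ * ∏ i : Fin n, (1 - z i.succ)⁻¹ := by
          rw [ENNReal.tsum_geometric, IH]
      _ = ∏ i, (1 - z i)⁻¹ := (Fin.prod_univ_succ (fun i => (1 - z i)⁻¹)).symm

end TsumLemmas

namespace RealProd

open Finset

variable {q : ℝ}

lemma hpos (hq0 : 0 < q) (hq1 : q < 1) (v : ℕ) (hv : 1 ≤ v) : 0 < 1 - q ^ v := by
  have h1 : q ^ v ≤ q ^ 1 := pow_le_pow_of_le_one hq0.le hq1.le hv
  simp only [pow_one] at h1
  linarith [hq1]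

lemma hone (hq0 : 0 < q) (hq1 : q < 1) (v : ℕ) (hv : 1 ≤ v) : 1 ≤ (1 - q ^ v)⁻¹ := by
  rw [le_inv_comm₀ one_pos (hpos hq0 hq1 v hv)]
  have : 0 < q ^ v := pow_pos hq0 v
  linarith

lemma summable_logP (hq0 : 0 < q) (hq1 : q < 1) :
    Summable fun n : ℕ => Real.log ((1 - q ^ (n + 1))⁻¹) := by
  refine Summable.of_nonneg_of_le (fun n => Real.log_nonneg (hone hq0 hq1 _ (by omega)))
    (fun n => ?_) (((summable_geometric_of_lt_one hq0.le hq1).mul_left q).mul_right (1 - q)⁻¹)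
  have hp := hpos hq0 hq1 (n + 1) (by omega)
  have hq' : 0 < 1 - q := by linarith
  have h1 : Real.log ((1 - q ^ (n + 1))⁻¹) ≤ (1 - q ^ (n + 1))⁻¹ - 1 :=
    Real.log_le_sub_one_of_pos (by positivity)
  have h2 : (1 - q ^ (n + 1))⁻¹ - 1 = q ^ (n + 1) * (1 - q ^ (n + 1))⁻¹ := by
    field_simp
    ring
  have h3 : (1 - q ^ (n + 1))⁻¹ ≤ (1 - q)⁻¹ := by
    apply inv_anti₀ hq'
    have : q ^ (n + 1) ≤ q ^ 1 := pow_le_pow_of_le_one hq0.le hq1.le (by omega)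
    simp only [pow_one] at this; linarith
  have h4 : q ^ (n + 1) * (1 - q ^ (n + 1))⁻¹ ≤ q ^ (n + 1) * (1 - q)⁻¹ :=
    mul_le_mul_of_nonneg_left h3 (by positivity)
  calc Real.log ((1 - q ^ (n + 1))⁻¹) ≤ q ^ (n + 1) * (1 - q ^ (n + 1))⁻¹ := by linarith
    _ ≤ q ^ (n + 1) * (1 - q)⁻¹ := h4
    _ = q * q ^ n * (1 - q)⁻¹ := by ring

lemma multipliableP (hq0 : 0 < q) (hq1 : q < 1) :
    Multipliable fun n : ℕ => (1 - q ^ (n + 1))⁻¹ := by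
  have := Real.multipliable_of_summable_log (f := fun n : ℕ => (1 - q ^ (n + 1))⁻¹)
    (fun n => by have := hpos hq0 hq1 (n + 1) (by omega); positivity)
    (summable_logP hq0 hq1)
  exact this

lemma one_le_prodR {ι : Type*} {s : Finset ι} {f : ι → ℝ} (h : ∀ i ∈ s, 1 ≤ f i) :
    1 ≤ ∏ i ∈ s, f i := by
  calc (1 : ℝ) = ∏ _i ∈ s, 1 := by simp
    _ ≤ ∏ i ∈ s, f i := Finset.prod_le_prod (by simp) h

lemma one_le_P (hq0 : 0 < q) (hq1 : q < 1) : (1 : ℝ) ≤ ∏' n : ℕ, (1 - q ^ (n + 1))⁻¹ :=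
  ge_of_tendsto' ((multipliableP hq0 hq1).hasProd.tendsto_prod_nat)
    (fun n => one_le_prodR fun i _ => hone hq0 hq1 (i + 1) i.succ_pos)

lemma partial_le_P (hq0 : 0 < q) (hq1 : q < 1) (M : ℕ) :
    ∏ n ∈ Finset.range M, (1 - q ^ (n + 1))⁻¹ ≤ ∏' n : ℕ, (1 - q ^ (n + 1))⁻¹ := by
  refine ge_of_tendsto ((multipliableP hq0 hq1).hasProd.tendsto_prod_nat) ?_
  filter_upwards [Filter.eventually_ge_atTop M] with n hn
  rw [← Finset.prod_range_mul_prod_Ico _ hn]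
  have h1 : (1 : ℝ) ≤ ∏ i ∈ Finset.Ico M n, (1 - q ^ (i + 1))⁻¹ :=
    one_le_prodR fun i _ => hone hq0 hq1 (i + 1) i.succ_pos
  have h0 : (0 : ℝ) ≤ ∏ i ∈ Finset.range M, (1 - q ^ (i + 1))⁻¹ :=
    le_trans zero_le_one (one_le_prodR fun i _ => hone hq0 hq1 (i + 1) i.succ_pos)
  exact le_mul_of_one_le_right h0 h1

lemma prod_R_le (hq0 : 0 < q) (hq1 : q < 1) {N k : ℕ} (R : Fin N → ℕ)
    (hR1 : ∀ i, 1 ≤ R i) (hRN : ∀ i, R i ≤ N)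
    (hfib : ∀ v, (univ.filter fun i => R i = v).card ≤ k) :
    ∏ i, (1 - q ^ R i)⁻¹ ≤ (∏' n : ℕ, (1 - q ^ (n + 1))⁻¹) ^ k := by
  have hP1 : (1 : ℝ) ≤ ∏' n : ℕ, (1 - q ^ (n + 1))⁻¹ := one_le_P hq0 hq1
  set t : Finset ℕ := (Finset.range N).image Nat.succ with ht
  have hmaps : ∀ i : Fin N, i ∈ (univ : Finset (Fin N)) → R i ∈ t := by
    intro i _
    simp only [ht, Finset.mem_image, Finset.mem_range]
    exact ⟨R i - 1, by have := hR1 i; have := hRN i; omega, by have := hR1 i; omega⟩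
  calc ∏ i, (1 - q ^ R i)⁻¹
      = ∏ v ∈ t, ∏ i ∈ univ.filter fun i => R i = v, (1 - q ^ R i)⁻¹ :=
        (Finset.prod_fiberwise_of_maps_to hmaps _).symm
    _ = ∏ v ∈ t, ((1 - q ^ v)⁻¹) ^ (univ.filter fun i => R i = v).card := by
        refine Finset.prod_congr rfl fun v _ => ?_
        rw [← Finset.prod_const]
        refine Finset.prod_congr rfl fun i hi => ?_
        simp only [Finset.mem_filter] at hi
        rw [hi.2]
    _ ≤ ∏ v ∈ t, ((1 - q ^ v)⁻¹) ^ k := by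
        refine Finset.prod_le_prod (fun v hv => ?_) (fun v hv => ?_) <;>
        · have hv1 : 1 ≤ v := by
            simp only [ht, Finset.mem_image, Finset.mem_range] at hv
            omega
          first
          | exact pow_nonneg (inv_nonneg.mpr (hpos hq0 hq1 v hv1).le) _
          | exact pow_le_pow_right₀ (hone hq0 hq1 v hv1) (hfib v)
    _ = (∏ v ∈ t, (1 - q ^ v)⁻¹) ^ k := Finset.prod_pow t k fun v => (1 - q ^ v)⁻¹
    _ ≤ (∏' n : ℕ, (1 - q ^ (n + 1))⁻¹) ^ k := by
        refine pow_le_pow_left₀ ?_ ?_ k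
        · exact Finset.prod_nonneg fun v hv => inv_nonneg.mpr (by
            have hv1 : 1 ≤ v := by
              simp only [ht, Finset.mem_image, Finset.mem_range] at hv
              omega
            exact (hpos hq0 hq1 v hv1).le)
        · have : ∏ v ∈ t, (1 - q ^ v)⁻¹ = ∏ n ∈ Finset.range N, (1 - q ^ (n + 1))⁻¹ :=
            Finset.prod_image fun a _ b _ h => Nat.succ_injective h
          rw [this]
          exact partial_le_P hq0 hq1 N

end RealProd

namespace ClusterGlue

open Finset ClusterAux

variable (N : ℕ) (x : Finset ℤ) (hx : x.card = N)

def Xe : Fin N → ℤ := fun i => x.orderEmbOfFin hx i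

def mP : Fin N → Prop := fun i => Xe N x hx i + 1 ∉ x

instance : DecidablePred (mP N x hx) := fun _ => inferInstanceAs (Decidable (_ ∉ _))

lemma Xe_strictMono : StrictMono (Xe N x hx) := (x.orderEmbOfFin hx).strictMono

lemma Xe_mem (i : Fin N) : Xe N x hx i ∈ x := Finset.orderEmbOfFin_mem x hx i

lemma Xe_surj {a : ℤ} (ha : a ∈ x) : ∃ i, Xe N x hx i = a := by
  have h1 : a ∈ Set.range ⇑(x.orderEmbOfFin hx) := by
    rw [Finset.range_orderEmbOfFin]
    exact Finset.mem_coe.mpr ha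
  exact h1

lemma hmP (i : Fin N) (h : ¬ mP N x hx i) : i.val + 1 < N := by
  rw [mP] at h
  push_neg at h
  obtain ⟨j, hj⟩ := Xe_surj N x hx h
  have hij : i < j := by
    have : Xe N x hx i < Xe N x hx j := by rw [hj]; omega
    exact (Xe_strictMono N x hx).lt_iff_lt.mp this
  rw [Fin.lt_def] at hij
  have := j.isLt
  omega

lemma Xe_consec (i : Fin N) (h : ¬ mP N x hx i) :
    Xe N x hx ⟨i.val + 1, hmP N x hx i h⟩ = Xe N x hx i + 1 := by
  have h' := h
  rw [mP] at h'
  push_neg at h'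
  obtain ⟨j, hj⟩ := Xe_surj N x hx h'
  have hij : i < j := by
    have : Xe N x hx i < Xe N x hx j := by rw [hj]; omega
    exact (Xe_strictMono N x hx).lt_iff_lt.mp this
  have h1 : Xe N x hx ⟨i.val + 1, hmP N x hx i h⟩ ≤ Xe N x hx j := by
    refine (Xe_strictMono N x hx).monotone ?_
    rw [Fin.le_def]; rw [Fin.lt_def] at hij; simpa using hij
  have h2 : Xe N x hx i < Xe N x hx ⟨i.val + 1, hmP N x hx i h⟩ := by
    refine Xe_strictMono N x hx ?_
    rw [Fin.lt_def]; simp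
  omega

lemma numClusters_eq : numClusters x = (univ.filter fun i => mP N x hx i).card := by
  rw [numClusters]
  refine (Finset.card_bij (fun i _ => Xe N x hx i) ?_ ?_ ?_).symm
  · intro i hi
    simp only [mem_filter, mem_univ, true_and] at hi
    simp only [Finset.mem_filter]
    exact ⟨Xe_mem N x hx i, hi⟩
  · intro i _ j _ hij
    exact (Xe_strictMono N x hx).injective hij
  · intro a ha
    simp only [Finset.mem_filter] at ha
    obtain ⟨i, hi⟩ := Xe_surj N x hx ha.1
    refine ⟨i, ?_, hi⟩
    simp only [mem_filter, mem_univ, true_and, mP, hi]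
    exact Finset.mem_filter.mpr ⟨Finset.mem_univ _, by rw [hi]; exact ha.2⟩

variable (y : Finset ℤ) (hy : y.card = N)

def dif : Fin N → ℤ := fun i => Xe N y hy i - Xe N x hx i

def aF : Fin N → ℕ := fun i => (-(dif N x hx y hy i)).toNat

def bF : Fin N → ℕ := fun i => (dif N x hx y hy i).toNat

def b2F : Fin N → ℕ := fun i => bF N x hx y hy i.rev

lemma dif_mono (i : Fin N) (h : ¬ mP N x hx i) :
    dif N x hx y hy i ≤ dif N x hx y hy ⟨i.val + 1, hmP N x hx i h⟩ := by
  have h1 := Xe_consec N x hx i h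
  have h2 : Xe N y hy i < Xe N y hy ⟨i.val + 1, hmP N x hx i h⟩ := by
    refine Xe_strictMono N y hy ?_
    rw [Fin.lt_def]; simp
  rw [dif, dif, h1]
  omega

lemma aF_anti (i : Fin N) (h : ¬ mP N x hx i) :
    aF N x hx y hy ⟨i.val + 1, hmP N x hx i h⟩ ≤ aF N x hx y hy i := by
  have := dif_mono N x hx y hy i h
  rw [aF, aF]
  exact Int.toNat_le_toNat (by omega)

lemma bF_mono (i : Fin N) (h : ¬ mP N x hx i) :
    bF N x hx y hy i ≤ bF N x hx y hy ⟨i.val + 1, hmP N x hx i h⟩ := by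
  have := dif_mono N x hx y hy i h
  rw [bF, bF]
  exact Int.toNat_le_toNat this

lemma b2F_anti (i : Fin N) (h : ¬ m2Of (mP N x hx) i) :
    b2F N x hx y hy ⟨i.val + 1, hm2Of (mP N x hx) i h⟩ ≤ b2F N x hx y hy i := by
  rw [m2Of] at h
  push_neg at h
  obtain ⟨h0, hmk⟩ := h
  have hrev : (⟨i.val + 1, hm2Of (mP N x hx) (i := i) (by rw [m2Of]; push_neg; exact ⟨h0, hmk⟩)⟩ : Fin N).rev
      = ⟨i.rev.val - 1, Nat.lt_of_le_of_lt (Nat.sub_le _ _) i.rev.isLt⟩ := by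
    apply Fin.ext
    simp only [Fin.val_rev]
    omega
  have hstep := bF_mono N x hx y hy ⟨i.rev.val - 1, Nat.lt_of_le_of_lt (Nat.sub_le _ _) i.rev.isLt⟩ hmk
  have hre : (⟨(⟨i.rev.val - 1, Nat.lt_of_le_of_lt (Nat.sub_le _ _) i.rev.isLt⟩ : Fin N).val + 1,
      hmP N x hx _ hmk⟩ : Fin N) = i.rev := by
    apply Fin.ext
    simp only [Fin.val_rev]
    have := i.isLt
    have hv : i.rev.val = N - (i.val + 1) := by simp [Fin.val_rev]
    omega
  rw [hre] at hstep
  rw [b2F, b2F, hrev]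
  exact hstep

end ClusterGlue

end Auxiliary

open scoped ENNReal

/-- For `N ≥ 1`, `1 ≤ k ≤ N`, `α > 0` and any `x ∈ P_{N,k}(ℤ)` (an `N`-element subset of `ℤ`
with at most `k` clusters), the sum over all `y ∈ P_N(ℤ)` of `e^{-α |x−y|₁}` is at most
`C_α^k`. -/
theorem exp_sum_d1_over_all_configs (N k : ℕ) (hN : 1 ≤ N) (hk : 1 ≤ k) (hkN : k ≤ N)
    (α : ℝ) (hα : 0 < α)
    (x : Finset ℤ) (hx : x.card = N) (hxk : numClusters x ≤ k) :
    ∑' y : { y : Finset ℤ // y.card = N },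
      Real.exp (-α * dOne N x y.1 hx y.2) ≤ Calpha α ^ k := by
  classical
  set q : ℝ := Real.exp (-α) with hqdef
  have hq0 : 0 < q := Real.exp_pos _
  have hq1 : q < 1 := by
    rw [hqdef, Real.exp_lt_one_iff]; linarith
  set P : ℝ := ∏' n : ℕ, (1 - q ^ (n + 1))⁻¹ with hPdef
  have hP1 : (1 : ℝ) ≤ P := RealProd.one_le_P hq0 hq1
  have hPeq : (∏' n : ℕ, (1 - Real.exp (-α * (n + 1)))⁻¹) = P := by
    rw [hPdef]
    refine tprod_congr fun n => ?_
    congr 2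
    rw [hqdef, ← Real.exp_nat_mul]
    congr 1
    push_cast
    ring
  have hCal : Calpha α = (1 - q)⁻¹ * P ^ 2 := by rw [Calpha, hPeq, hqdef]
  have h1q : (1 : ℝ) ≤ (1 - q)⁻¹ := by
    have := RealProd.hone hq0 hq1 1 le_rfl
    simpa using this
  have h1q0 : (0 : ℝ) < 1 - q := by linarith
  have hCal0 : 0 ≤ Calpha α := by
    rw [hCal]; positivity
  have hmm : ∀ i, ¬ ClusterGlue.mP N x hx i → i.val + 1 < N := ClusterGlue.hmP N x hx
  have hmm2 : ∀ i, ¬ ClusterAux.m2Of (ClusterGlue.mP N x hx) i → i.val + 1 < N :=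
    ClusterAux.hm2Of (ClusterGlue.mP N x hx)
  have hmcard : (Finset.univ.filter fun i => ClusterGlue.mP N x hx i).card ≤ k := by
    rw [← ClusterGlue.numClusters_eq N x hx]; exact hxk
  have hfib1 : ∀ v, (Finset.univ.filter
      fun i => ClusterAux.Rwt (ClusterGlue.mP N x hx) i = v).card ≤ k := fun v =>
    le_trans (ClusterAux.card_fiber_le (ClusterGlue.mP N x hx) hmm v) hmcard
  have hfib2 : ∀ v, (Finset.univ.filter
      fun i => ClusterAux.Rwt (ClusterAux.m2Of (ClusterGlue.mP N x hx)) i = v).card ≤ k :=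
    fun v =>
    le_trans (ClusterAux.card_fiber_le (ClusterAux.m2Of (ClusterGlue.mP N x hx)) hmm2 v)
      (le_trans (ClusterAux.card_m2Of_le (ClusterGlue.mP N x hx) hmm) hmcard)
  set R1 : Fin N → ℕ := ClusterAux.Rwt (ClusterGlue.mP N x hx) with hR1def
  set R2 : Fin N → ℕ := ClusterAux.Rwt (ClusterAux.m2Of (ClusterGlue.mP N x hx)) with hR2def
  set Q : ℝ≥0∞ := ENNReal.ofReal q with hQdef
  set G1 : (Fin N → ℕ) → ℝ≥0∞ := fun u => ∏ i, (Q ^ R1 i) ^ u i with hG1def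
  set G2 : (Fin N → ℕ) → ℝ≥0∞ := fun u => ∏ i, (Q ^ R2 i) ^ u i with hG2def
  set Psi : { y : Finset ℤ // y.card = N } → ((Fin N → ℕ) × (Fin N → ℕ)) := fun y =>
    (ClusterAux.enc (ClusterGlue.mP N x hx) hmm (ClusterGlue.aF N x hx y.1 y.2),
     ClusterAux.enc (ClusterAux.m2Of (ClusterGlue.mP N x hx)) hmm2
       (ClusterGlue.b2F N x hx y.1 y.2)) with hPsidef
  -- pointwise identity
  have hpoint : ∀ y : { y : Finset ℤ // y.card = N },
      ENNReal.ofReal (Real.exp (-α * dOne N x y.1 hx y.2)) = G1 (Psi y).1 * G2 (Psi y).2 := by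
    rintro ⟨y, hy⟩
    have hd1 : dOne N x y hx hy
        = ((∑ i, (ClusterGlue.aF N x hx y hy i + ClusterGlue.bF N x hx y hy i) : ℕ) : ℝ) := by
      rw [dOne, Nat.cast_sum]
      refine Finset.sum_congr rfl fun i _ => ?_
      have hcast : (((x.orderIsoOfFin hx i : ℤ) : ℝ)) - (((y.orderIsoOfFin hy i : ℤ) : ℝ))
          = ((ClusterGlue.Xe N x hx i - ClusterGlue.Xe N y hy i : ℤ) : ℝ) := by
        rw [ClusterGlue.Xe, ClusterGlue.Xe, Finset.coe_orderIsoOfFin_apply y hy i,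
          Finset.coe_orderIsoOfFin_apply x hx i]
        push_cast
        ring
      rw [hcast, ← Int.cast_abs]
      have hnat : |ClusterGlue.Xe N x hx i - ClusterGlue.Xe N y hy i|
          = ((ClusterGlue.aF N x hx y hy i + ClusterGlue.bF N x hx y hy i : ℕ) : ℤ) := by
        rw [Int.abs_eq_natAbs]
        simp only [ClusterGlue.aF, ClusterGlue.bF, ClusterGlue.dif]
        omega
      rw [hnat]
      push_cast
      ring
    have hsa : ∑ i, ClusterGlue.aF N x hx y hy i
        = ∑ i, R1 i * ClusterAux.enc (ClusterGlue.mP N x hx) hmm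
            (ClusterGlue.aF N x hx y hy) i :=
      ClusterAux.sum_total (ClusterGlue.mP N x hx) hmm (ClusterGlue.aF_anti N x hx y hy)
    have hsb : ∑ i, ClusterGlue.bF N x hx y hy i
        = ∑ i, R2 i * ClusterAux.enc (ClusterAux.m2Of (ClusterGlue.mP N x hx)) hmm2
            (ClusterGlue.b2F N x hx y hy) i := by
      have hrev : ∑ i, ClusterGlue.bF N x hx y hy i
          = ∑ i, ClusterGlue.b2F N x hx y hy i := by
        refine Fintype.sum_bijective Fin.rev Fin.rev_bijective _ _ fun i => ?_
        simp [ClusterGlue.b2F, Fin.rev_rev]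
      rw [hrev]
      exact ClusterAux.sum_total (ClusterAux.m2Of (ClusterGlue.mP N x hx)) hmm2
        (ClusterGlue.b2F_anti N x hx y hy)
    have hpow : ∀ (c : Fin N → ℕ) (e : Fin N → ℕ),
        Q ^ (∑ i, c i * e i) = ∏ i, (Q ^ c i) ^ e i := by
      intro c e
      rw [← Finset.prod_pow_eq_pow_sum]
      exact Finset.prod_congr rfl fun i _ => by rw [← pow_mul]
    rw [hd1, Finset.sum_add_distrib]
    rw [show -α * ((((∑ i, ClusterGlue.aF N x hx y hy i)
        + ∑ i, ClusterGlue.bF N x hx y hy i : ℕ)) : ℝ)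
      = ((((∑ i, ClusterGlue.aF N x hx y hy i)
        + ∑ i, ClusterGlue.bF N x hx y hy i : ℕ)) : ℝ) * (-α) by ring]
    rw [Real.exp_nat_mul, ← hqdef, pow_add]
    rw [ENNReal.ofReal_mul (by positivity), ENNReal.ofReal_pow hq0.le,
      ENNReal.ofReal_pow hq0.le, ← hQdef]
    rw [hsa, hsb, hpow, hpow]
  -- injectivity
  have hinj : Function.Injective Psi := by
    rintro ⟨y, hy⟩ ⟨y', hy'⟩ h
    simp only [hPsidef, Prod.mk.injEq] at h
    have ha := ClusterAux.enc_inj (ClusterGlue.mP N x hx) hmm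
      (ClusterGlue.aF_anti N x hx y hy) (ClusterGlue.aF_anti N x hx y' hy') h.1
    have hb2 := ClusterAux.enc_inj (ClusterAux.m2Of (ClusterGlue.mP N x hx)) hmm2
      (ClusterGlue.b2F_anti N x hx y hy) (ClusterGlue.b2F_anti N x hx y' hy') h.2
    have hb : ClusterGlue.bF N x hx y hy = ClusterGlue.bF N x hx y' hy' := by
      funext i
      have h3 := congrFun hb2 i.rev
      simpa [ClusterGlue.b2F, Fin.rev_rev] using h3
    have hd : ∀ i, ClusterGlue.dif N x hx y hy i = ClusterGlue.dif N x hx y' hy' i := by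
      intro i
      have h1 := congrFun ha i
      have h2 := congrFun hb i
      simp only [ClusterGlue.aF, ClusterGlue.bF] at h1 h2
      omega
    have hY : ⇑(y.orderEmbOfFin hy) = ⇑(y'.orderEmbOfFin hy') := by
      funext i
      have h5 := hd i
      simp only [ClusterGlue.dif, ClusterGlue.Xe] at h5
      omega
    have hco : (y : Set ℤ) = (y' : Set ℤ) := by
      rw [← Finset.range_orderEmbOfFin y hy, ← Finset.range_orderEmbOfFin y' hy', hY]
    exact Subtype.ext (Finset.coe_injective hco)
  -- transfer lemma from ENNReal products to real products
  have hQtrans : ∀ (R : Fin N → ℕ), (∀ i, 1 ≤ R i) →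
      ∏ i, (1 - Q ^ R i)⁻¹ = ENNReal.ofReal (∏ i, (1 - q ^ R i)⁻¹) := by
    intro R hR
    rw [ENNReal.ofReal_prod_of_nonneg
      (fun i _ => inv_nonneg.mpr (RealProd.hpos hq0 hq1 _ (hR i)).le)]
    refine Finset.prod_congr rfl fun i _ => ?_
    rw [ENNReal.ofReal_inv_of_pos (RealProd.hpos hq0 hq1 _ (hR i)),
      ENNReal.ofReal_sub 1 (pow_nonneg hq0.le _), ENNReal.ofReal_one,
      ENNReal.ofReal_pow hq0.le, ← hQdef]
  have hones1 : ∀ i, 1 ≤ R1 i := ClusterAux.one_le_Rwt (ClusterGlue.mP N x hx)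
  have hones2 : ∀ i, 1 ≤ R2 i :=
    ClusterAux.one_le_Rwt (ClusterAux.m2Of (ClusterGlue.mP N x hx))
  have hleN1 : ∀ i, R1 i ≤ N := ClusterAux.Rwt_le (ClusterGlue.mP N x hx)
  have hleN2 : ∀ i, R2 i ≤ N := ClusterAux.Rwt_le (ClusterAux.m2Of (ClusterGlue.mP N x hx))
  -- the main chain in ℝ≥0∞
  have hchain : ∑' y : { y : Finset ℤ // y.card = N },
      ENNReal.ofReal (Real.exp (-α * dOne N x y.1 hx y.2))
      ≤ ENNReal.ofReal (Calpha α ^ k) := by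
    calc ∑' y : { y : Finset ℤ // y.card = N },
        ENNReal.ofReal (Real.exp (-α * dOne N x y.1 hx y.2))
        = ∑' y : { y : Finset ℤ // y.card = N }, G1 (Psi y).1 * G2 (Psi y).2 :=
          tsum_congr hpoint
      _ ≤ ∑' p : (Fin N → ℕ) × (Fin N → ℕ), G1 p.1 * G2 p.2 :=
          ENNReal.tsum_comp_le_tsum_of_injective hinj _
      _ = (∑' u : Fin N → ℕ, G1 u) * (∑' v : Fin N → ℕ, G2 v) := by
          rw [ENNReal.tsum_prod']
          calc ∑' (u : Fin N → ℕ) (v : Fin N → ℕ), G1 u * G2 v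
              = ∑' u : Fin N → ℕ, G1 u * ∑' v : Fin N → ℕ, G2 v :=
                tsum_congr fun u => ENNReal.tsum_mul_left
            _ = (∑' u : Fin N → ℕ, G1 u) * ∑' v : Fin N → ℕ, G2 v := ENNReal.tsum_mul_right
      _ = (∏ i, (1 - Q ^ R1 i)⁻¹) * (∏ i, (1 - Q ^ R2 i)⁻¹) := by
          rw [show (∑' u : Fin N → ℕ, G1 u) = ∏ i, (1 - Q ^ R1 i)⁻¹ from
              tsum_pi_pow N (fun i => Q ^ R1 i),
            show (∑' v : Fin N → ℕ, G2 v) = ∏ i, (1 - Q ^ R2 i)⁻¹ from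
              tsum_pi_pow N (fun i => Q ^ R2 i)]
      _ = ENNReal.ofReal (∏ i, (1 - q ^ R1 i)⁻¹)
          * ENNReal.ofReal (∏ i, (1 - q ^ R2 i)⁻¹) := by
          rw [hQtrans R1 hones1, hQtrans R2 hones2]
      _ ≤ ENNReal.ofReal (P ^ k) * ENNReal.ofReal (P ^ k) := by
          refine mul_le_mul' (ENNReal.ofReal_le_ofReal ?_) (ENNReal.ofReal_le_ofReal ?_)
          · rw [hPdef]
            exact RealProd.prod_R_le hq0 hq1 R1 hones1 hleN1 hfib1
          · rw [hPdef]
            exact RealProd.prod_R_le hq0 hq1 R2 hones2 hleN2 hfib2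
      _ = ENNReal.ofReal (P ^ k * P ^ k) := (ENNReal.ofReal_mul (by positivity)).symm
      _ ≤ ENNReal.ofReal (Calpha α ^ k) := by
          refine ENNReal.ofReal_le_ofReal ?_
          rw [hCal, mul_pow]
          have hPk : P ^ k * P ^ k = (P ^ 2) ^ k := by ring
          rw [hPk]
          refine le_mul_of_one_le_left (by positivity) ?_
          exact one_le_pow₀ h1q
  -- conclude
  by_cases hsum : Summable (fun y : { y : Finset ℤ // y.card = N } =>
    Real.exp (-α * dOne N x y.1 hx y.2))
  · have h1 := ENNReal.ofReal_tsum_of_nonneg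
      (fun y : { y : Finset ℤ // y.card = N } => (Real.exp_pos (-α * dOne N x y.1 hx y.2)).le)
      hsum
    rw [← h1] at hchain
    exact (ENNReal.ofReal_le_ofReal_iff (pow_nonneg hCal0 k)).mp hchain
  · rw [tsum_eq_zero_of_not_summable hsum]
    exact pow_nonneg hCal0 k
end

section
/- Let N ≥ 1, 1 ≤ k ≤ N, and α > 0. Then sup over x ∈ P_{N,k}(ℤ) of Σ_{y ∈ P_{N,k}(ℤ)} e^{-α d_H(x,y)} ≤ C_{α,k} · N^{2k} for a constant C_{α,k} depending only on α and k. -/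
open Real

section Aux

def leftEnds (y : Finset ℤ) : Finset ℤ := y.filter (fun i => i - 1 ∉ y)
def rightEnds (y : Finset ℤ) : Finset ℤ := y.filter (fun i => i + 1 ∉ y)

lemma step_min (y : Finset ℤ) (hy : y.Nonempty) (i : ℤ) (hi : i ∈ y) :
    ∃ s : ℤ, i < s ∧ s ∉ y ∧ ∀ t, i ≤ t → t < s → t ∈ y := by
  classical
  set M := y.max' hy with hM
  set T := (Finset.Icc i (M + 1)).filter (fun t => t ∉ y) with hT
  have hM1 : M + 1 ∉ y := fun h => by
    have := y.le_max' (M + 1) h; omega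
  have hiM : i ≤ M := y.le_max' i hi
  have hTne : T.Nonempty := ⟨M + 1, by simp [hT, hM1]; omega⟩
  set s := T.min' hTne with hs
  have hsT : s ∈ T := T.min'_mem hTne
  have hsy : s ∉ y := (Finset.mem_filter.1 hsT).2
  have his : i ≤ s := by
    have := (Finset.mem_Icc.1 (Finset.mem_filter.1 hsT).1).1; omega
  have hsM : s ≤ M + 1 := (Finset.mem_Icc.1 (Finset.mem_filter.1 hsT).1).2
  refine ⟨s, ?_, hsy, ?_⟩
  · rcases eq_or_lt_of_le his with h | h
    · exact absurd (h ▸ hi) hsy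
    · exact h
  · intro t hit hts
    by_contra hty
    have : t ∈ T := by
      simp only [hT, Finset.mem_filter, Finset.mem_Icc]
      exact ⟨⟨hit, by omega⟩, hty⟩
    have := T.min'_le t this
    omega

lemma exists_rightEnd (y : Finset ℤ) (hy : y.Nonempty) (i : ℤ) (hi : i ∈ y) :
    ∃ r ∈ rightEnds y, i ≤ r ∧ ∀ t, i ≤ t → t ≤ r → t ∈ y := by
  obtain ⟨s, his, hsy, hint⟩ := step_min y hy i hi
  refine ⟨s - 1, ?_, by omega, fun t h1 h2 => hint t h1 (by omega)⟩
  have : s - 1 ∈ y := hint (s - 1) (by omega) (by omega)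
  simp only [rightEnds, Finset.mem_filter]
  constructor
  · exact this
  · simpa using hsy

lemma mem_iff_ends (y : Finset ℤ) (i : ℤ) :
    i ∈ y ↔ ∃ r ∈ rightEnds y, i ≤ r ∧ ∀ l ∈ leftEnds y, i < l → r < l := by
  constructor
  · intro hi
    obtain ⟨r, hr, hir, hint⟩ := exists_rightEnd y ⟨i, hi⟩ i hi
    refine ⟨r, hr, hir, fun l hl hil => ?_⟩
    by_contra h
    push_neg at h
    have hl1 : l - 1 ∈ y := hint (l - 1) (by omega) (by omega)
    exact (Finset.mem_filter.1 hl).2 hl1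
  · rintro ⟨r, hr, hir, hcond⟩
    by_contra hi
    have hry : r ∈ y := (Finset.mem_filter.1 hr).1
    have hirlt : i < r := by
      rcases eq_or_lt_of_le hir with h | h
      · exact absurd (h ▸ hry) hi
      · exact h
    classical
    set U := (Finset.Icc i r).filter (fun t => t ∈ y) with hU
    have hUne : U.Nonempty := ⟨r, by simp [hU, hry]; omega⟩
    set l := U.min' hUne with hl
    have hlU : l ∈ U := U.min'_mem hUne
    have hly : l ∈ y := (Finset.mem_filter.1 hlU).2
    have hlr : l ≤ r := (Finset.mem_Icc.1 (Finset.mem_filter.1 hlU).1).2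
    have hil : i ≤ l := (Finset.mem_Icc.1 (Finset.mem_filter.1 hlU).1).1
    have hilt : i < l := by
      rcases eq_or_lt_of_le hil with h | h
      · exact absurd (h ▸ hly) hi
      · exact h
    have hl1 : l - 1 ∉ y := by
      intro h
      have : l - 1 ∈ U := by
        simp only [hU, Finset.mem_filter, Finset.mem_Icc]
        exact ⟨⟨by omega, by omega⟩, h⟩
      have := U.min'_le _ this
      omega
    have hlL : l ∈ leftEnds y := Finset.mem_filter.2 ⟨hly, hl1⟩
    have := hcond l hlL hilt
    omega

lemma ends_determine {y y' : Finset ℤ} (hL : leftEnds y = leftEnds y')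
    (hR : rightEnds y = rightEnds y') : y = y' := by
  ext i
  rw [mem_iff_ends, mem_iff_ends, hL, hR]

lemma card_leftEnds_le (y : Finset ℤ) (hy : y.Nonempty) :
    (leftEnds y).card ≤ (rightEnds y).card := by
  classical
  have hnonempty : ∀ l ∈ leftEnds y, ((rightEnds y).filter (fun r => l ≤ r)).Nonempty := by
    intro l hl
    obtain ⟨r, hr, hlr, _⟩ := exists_rightEnd y hy l (Finset.mem_filter.1 hl).1
    exact ⟨r, Finset.mem_filter.2 ⟨hr, hlr⟩⟩
  apply Finset.card_le_card_of_injOn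
    (fun l => if h : l ∈ leftEnds y then ((rightEnds y).filter (fun r => l ≤ r)).min' (hnonempty l h) else 0)
  · intro l hl
    rw [Finset.mem_coe] at hl
    simp only [hl, dif_pos, Finset.mem_coe]
    exact (Finset.mem_filter.1 (Finset.min'_mem ((rightEnds y).filter (fun r => l ≤ r)) _)).1
  · intro l hl l' hl' heq
    simp only [Finset.mem_coe] at hl hl'
    simp only [hl, hl', dif_pos] at heq
    by_contra hne
    -- wlog l < l'
    have key : ∀ a b : ℤ, a ∈ leftEnds y → b ∈ leftEnds y → a < b →
        (ha : ((rightEnds y).filter (fun r => a ≤ r)).Nonempty) →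
        (hb : ((rightEnds y).filter (fun r => b ≤ r)).Nonempty) →
        ((rightEnds y).filter (fun r => a ≤ r)).min' ha ≠
        ((rightEnds y).filter (fun r => b ≤ r)).min' hb := by
      intro a b haL hbL hab ha hb hcontra
      have hay : a ∈ y := (Finset.mem_filter.1 haL).1
      have hb1 : b - 1 ∉ y := (Finset.mem_filter.1 hbL).2
      obtain ⟨s, has, hsy, hint⟩ := step_min y hy a hay
      -- s ≤ b - 1
      have hsb : s ≤ b - 1 := by
        by_contra h
        push_neg at h
        exact hb1 (hint (b-1) (by omega) (by omega))
      have hs1R : s - 1 ∈ rightEnds y := by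
        refine Finset.mem_filter.2 ⟨hint (s-1) (by omega) (by omega), ?_⟩
        simpa using hsy
      have hmem : s - 1 ∈ (rightEnds y).filter (fun r => a ≤ r) :=
        Finset.mem_filter.2 ⟨hs1R, by omega⟩
      have h1 : ((rightEnds y).filter (fun r => a ≤ r)).min' ha ≤ s - 1 :=
        Finset.min'_le _ _ hmem
      have h2 : b ≤ ((rightEnds y).filter (fun r => b ≤ r)).min' hb :=
        (Finset.mem_filter.1 (Finset.min'_mem _ _)).2
      omega
    rcases lt_or_gt_of_ne hne with h | h
    · exact key l l' hl hl' h _ _ heq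
    · exact key l' l hl' hl h _ _ heq.symm

lemma leftEnds_nonempty {y : Finset ℤ} (hy : y.Nonempty) : (leftEnds y).Nonempty := by
  refine ⟨y.min' hy, Finset.mem_filter.2 ⟨y.min'_mem hy, fun h => ?_⟩⟩
  have := y.min'_le _ h; omega

lemma rightEnds_nonempty {y : Finset ℤ} (hy : y.Nonempty) : (rightEnds y).Nonempty := by
  refine ⟨y.max' hy, Finset.mem_filter.2 ⟨y.max'_mem hy, fun h => ?_⟩⟩
  have := y.le_max' _ h; omega

def pad (k : ℕ) (s : Finset ℤ) : Fin k → ℤ :=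
  fun i => (s.sort (· ≤ ·)).getD i (s.sort (· ≤ ·)).headI

lemma pad_mem {k : ℕ} {s : Finset ℤ} (hs : s.Nonempty) (i : Fin k) : pad k s i ∈ s := by
  have hlen : (s.sort (· ≤ ·)).length = s.card := Finset.length_sort _
  have hne : s.sort (· ≤ ·) ≠ [] := by
    intro h; rw [← List.length_eq_zero_iff] at h; rw [hlen] at h
    exact hs.card_pos.ne' h
  have hhead : (s.sort (· ≤ ·)).headI ∈ s := by
    rw [← Finset.mem_sort (· ≤ ·)]
    cases h : s.sort (· ≤ ·) with
    | nil => exact absurd h hne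
    | cons a l => simp [List.headI]
  unfold pad
  by_cases h : (i : ℕ) < (s.sort (· ≤ ·)).length
  · rw [List.getD_eq_getElem _ _ h, ← Finset.mem_sort (· ≤ ·)]
    exact List.getElem_mem _
  · rw [List.getD_eq_default _ _ (by omega)]
    exact hhead

lemma pad_image {k : ℕ} {s : Finset ℤ} (hs : s.Nonempty) (hcard : s.card ≤ k) :
    Finset.image (pad k s) Finset.univ = s := by
  apply Finset.Subset.antisymm
  · intro a ha
    obtain ⟨i, _, rfl⟩ := Finset.mem_image.1 ha
    exact pad_mem hs i
  · intro a ha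
    have hlen : (s.sort (· ≤ ·)).length = s.card := Finset.length_sort _
    have : a ∈ s.sort (· ≤ ·) := (Finset.mem_sort _).2 ha
    obtain ⟨n, hn⟩ := List.mem_iff_getElem.1 this
    obtain ⟨hlt, hget⟩ := hn
    refine Finset.mem_image.2 ⟨⟨n, by omega⟩, Finset.mem_univ _, ?_⟩
    unfold pad
    rw [List.getD_eq_getElem _ _ (by simpa using hlt)]
    exact hget

lemma summable_exp_abs {β : ℝ} (hβ : 0 < β) :
    Summable (fun q : ℤ => Real.exp (-β * |(q : ℝ)|)) := by
  have key : ∀ q : ℤ, Real.exp (-β * |(q : ℝ)|) = Real.exp (-β) ^ q.natAbs := by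
    intro q
    rw [← Real.exp_nat_mul]
    congr 1
    have : |(q : ℝ)| = (q.natAbs : ℝ) := by
      simp [Nat.cast_natAbs]
    rw [this]; ring
  simp_rw [key]
  apply Summable.of_nat_of_neg
  · simpa using summable_geometric_of_lt_one (le_of_lt (Real.exp_pos (-β)))
      (Real.exp_lt_one_iff.2 (by linarith : -β < 0))
  · simpa using summable_geometric_of_lt_one (le_of_lt (Real.exp_pos (-β)))
      (Real.exp_lt_one_iff.2 (by linarith : -β < 0))

lemma sum_exp_dist_le {β : ℝ} (hβ : 0 < β) (T : Finset ℤ) (a : ℤ) :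
    ∑ p ∈ T, Real.exp (-β * dist p a) ≤ ∑' q : ℤ, Real.exp (-β * |(q : ℝ)|) := by
  have h1 : ∑ p ∈ T, Real.exp (-β * dist p a)
      = ∑ q ∈ T.image (fun p => p - a), Real.exp (-β * |(q : ℝ)|) := by
    rw [Finset.sum_image (by intro x _ y _ h; exact sub_left_injective h)]
    congr 1
    ext p
    congr 1
    rw [Int.dist_eq]
    push_cast
    ring_nf
  rw [h1]
  exact Summable.sum_le_tsum _ (fun q _ => (Real.exp_pos _).le) (summable_exp_abs hβ)

lemma rightEnds_card (y : Finset ℤ) : (rightEnds y).card = numClusters y := rfl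

end Aux

/-- For every `α > 0` and `k ≥ 1` there is a constant `C = C_{α,k}` such that for all
`N ≥ 1` with `k ≤ N` and every `x ∈ P_{N,k}(ℤ)`,
`Σ_{y ∈ P_{N,k}(ℤ)} e^{-α d_H(x,y)} ≤ C · N^{2k}`. -/
theorem exp_sum_hausdorff_bound (α : ℝ) (hα : 0 < α) (k : ℕ) (hk : 1 ≤ k) :
    ∃ C : ℝ, 0 < C ∧
      ∀ N : ℕ, 1 ≤ N → k ≤ N →
        ∀ x : Finset ℤ, x.card = N → numClusters x ≤ k →
          ∑' y : { y : Finset ℤ // y.card = N ∧ numClusters y ≤ k },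
              Real.exp (-α * (EMetric.hausdorffEdist (x : Set ℤ) (y.1 : Set ℤ)).toReal)
            ≤ C * (N : ℝ) ^ (2 * k) := by
  classical
  set β : ℝ := α / (2 * k) with hβdef
  have hβ : 0 < β := by
    apply div_pos hα
    positivity
  set S : ℝ := ∑' q : ℤ, Real.exp (-β * |(q : ℝ)|) with hSdef
  have hS1 : 1 ≤ S := by
    have h := Summable.le_tsum (summable_exp_abs hβ) 0 (fun j _ => (Real.exp_pos _).le)
    rw [hSdef]
    simpa using h
  have hS0 : 0 ≤ S := by linarith
  refine ⟨S ^ (2 * k), by positivity, ?_⟩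
  intro N hN hkN x hxcard hxcl
  have hxne : x.Nonempty := Finset.card_pos.1 (by omega)
  -- the majorant pieces
  set Hr : ℤ → ℝ := fun p => ∑ a ∈ x, Real.exp (-β * dist p a) with hHr
  have hHr0 : ∀ p, 0 ≤ Hr p := fun p => Finset.sum_nonneg fun a _ => (Real.exp_pos _).le
  set P : (Fin k → ℤ) → ℝ := fun u => ∏ i, Hr (u i) with hP
  have hP0 : ∀ u, 0 ≤ P u := fun u => Finset.prod_nonneg fun i _ => hHr0 _
  -- bound on sums of P over any finset
  have hPsum : ∀ Z : Finset (Fin k → ℤ), ∑ u ∈ Z, P u ≤ ((N : ℝ) * S) ^ k := by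
    intro Z
    have hsub : Z ⊆ Fintype.piFinset (fun i => Z.image (fun u => u i)) := by
      intro u hu
      rw [Fintype.mem_piFinset]
      exact fun i => Finset.mem_image_of_mem _ hu
    calc ∑ u ∈ Z, P u ≤ ∑ u ∈ Fintype.piFinset (fun i => Z.image (fun u => u i)), P u :=
          Finset.sum_le_sum_of_subset_of_nonneg hsub (fun u _ _ => hP0 u)
      _ = ∏ i : Fin k, ∑ p ∈ Z.image (fun u => u i), Hr p :=
          (Finset.prod_univ_sum _ _).symm
      _ ≤ ∏ _i : Fin k, ((N : ℝ) * S) := by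
          apply Finset.prod_le_prod
          · intro i _; exact Finset.sum_nonneg fun p _ => hHr0 p
          · intro i _
            calc ∑ p ∈ Z.image (fun u => u i), Hr p
                = ∑ a ∈ x, ∑ p ∈ Z.image (fun u => u i), Real.exp (-β * dist p a) :=
                  Finset.sum_comm
              _ ≤ ∑ _a ∈ x, S :=
                  Finset.sum_le_sum fun a _ => sum_exp_dist_le hβ _ a
              _ = (N : ℝ) * S := by rw [Finset.sum_const, hxcard]; simp
      _ = ((N : ℝ) * S) ^ k := by rw [Finset.prod_const]; simp
  apply tsum_le_of_sum_le' (by positivity)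
  intro F
  have hyne : ∀ y : { y : Finset ℤ // y.card = N ∧ numClusters y ≤ k }, y.1.Nonempty := fun y => Finset.card_pos.1 (by omega)
  have hLcard : ∀ y : { y : Finset ℤ // y.card = N ∧ numClusters y ≤ k }, (leftEnds y.1).card ≤ k := by
    intro y
    have h1 := card_leftEnds_le y.1 (hyne y)
    rw [rightEnds_card] at h1
    omega
  have hRcard : ∀ y : { y : Finset ℤ // y.card = N ∧ numClusters y ≤ k }, (rightEnds y.1).card ≤ k := by
    intro y
    rw [rightEnds_card]
    exact y.2.2
  set j : { y : Finset ℤ // y.card = N ∧ numClusters y ≤ k } → (Fin k → ℤ) × (Fin k → ℤ) :=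
    fun y => (pad k (leftEnds y.1), pad k (rightEnds y.1)) with hj
  have hjinj : Function.Injective j := by
    intro y y' h
    have h1 : pad k (leftEnds y.1) = pad k (leftEnds y'.1) := congrArg Prod.fst h
    have h2 : pad k (rightEnds y.1) = pad k (rightEnds y'.1) := congrArg Prod.snd h
    have hL : leftEnds y.1 = leftEnds y'.1 := by
      rw [← pad_image (leftEnds_nonempty (hyne y)) (hLcard y),
        ← pad_image (leftEnds_nonempty (hyne y')) (hLcard y'), h1]
    have hR : rightEnds y.1 = rightEnds y'.1 := by
      rw [← pad_image (rightEnds_nonempty (hyne y)) (hRcard y),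
        ← pad_image (rightEnds_nonempty (hyne y')) (hRcard y'), h2]
    exact Subtype.ext (ends_determine hL hR)
  -- pointwise bound
  have hpoint : ∀ y : { y : Finset ℤ // y.card = N ∧ numClusters y ≤ k },
      Real.exp (-α * (EMetric.hausdorffEdist (x : Set ℤ) (y.1 : Set ℤ)).toReal)
        ≤ P (j y).1 * P (j y).2 := by
    intro y
    set D := (EMetric.hausdorffEdist (x : Set ℤ) (y.1 : Set ℤ)).toReal with hD
    have hfin : EMetric.hausdorffEdist (x : Set ℤ) (y.1 : Set ℤ) ≠ ⊤ :=
      Metric.hausdorffEdist_ne_top_of_nonempty_of_bounded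
        (by exact_mod_cast hxne) (by exact_mod_cast hyne y)
        (x.finite_toSet.isBounded) ((y.1).finite_toSet.isBounded)
    have hkey : ∀ p ∈ y.1, Real.exp (-β * D) ≤ Hr p := by
      intro p hp
      obtain ⟨a, ha, hinf⟩ := (x.finite_toSet.isCompact).exists_infEdist_eq_edist
        (by exact_mod_cast hxne) (p : ℤ)
      have hle : edist (p : ℤ) a ≤ EMetric.hausdorffEdist (x : Set ℤ) (y.1 : Set ℤ) := by
        rw [← hinf, show EMetric.hausdorffEdist (x : Set ℤ) (y.1 : Set ℤ) = Metric.hausdorffEDist (x : Set ℤ) (y.1 : Set ℤ) from rfl, EMetric.hausdorffEdist_comm]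
        exact EMetric.infEdist_le_hausdorffEdist_of_mem (by exact_mod_cast hp)
      have hdist : dist (p : ℤ) a ≤ D := by
        rw [dist_edist, hD]
        exact ENNReal.toReal_mono hfin hle
      have h1 : Real.exp (-β * D) ≤ Real.exp (-β * dist (p : ℤ) a) := by
        apply Real.exp_le_exp.2
        nlinarith
      refine h1.trans ?_
      have h2 : Real.exp (-β * dist (p : ℤ) a) ≤ ∑ b ∈ x, Real.exp (-β * dist (p : ℤ) b) :=
        Finset.single_le_sum (f := fun b => Real.exp (-β * dist (p : ℤ) b))
          (fun b _ => (Real.exp_pos _).le) ha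
      exact h2
    have hD0 : 0 ≤ D := ENNReal.toReal_nonneg
    have hconst : Real.exp (-β * D) ^ k = ∏ _i : Fin k, Real.exp (-β * D) := by
      rw [Finset.prod_const, Finset.card_univ, Fintype.card_fin]
    have hbL : Real.exp (-β * D) ^ k ≤ P (j y).1 := by
      rw [hconst]
      show ∏ _i : Fin k, Real.exp (-β * D) ≤ ∏ i : Fin k, Hr ((j y).1 i)
      refine Finset.prod_le_prod (fun i _ => (Real.exp_pos _).le) (fun i _ => ?_)
      exact hkey _ (Finset.filter_subset _ _ (pad_mem (leftEnds_nonempty (hyne y)) i))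
    have hbR : Real.exp (-β * D) ^ k ≤ P (j y).2 := by
      rw [hconst]
      show ∏ _i : Fin k, Real.exp (-β * D) ≤ ∏ i : Fin k, Hr ((j y).2 i)
      refine Finset.prod_le_prod (fun i _ => (Real.exp_pos _).le) (fun i _ => ?_)
      exact hkey _ (Finset.filter_subset _ _ (pad_mem (rightEnds_nonempty (hyne y)) i))
    have heq : Real.exp (-α * D) = Real.exp (-β * D) ^ k * Real.exp (-β * D) ^ k := by
      rw [← pow_add, ← Real.exp_nat_mul]
      congr 1
      have hk0 : (k : ℝ) ≠ 0 := by positivity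
      rw [hβdef]
      push_cast
      field_simp
      ring
    rw [heq]
    exact mul_le_mul hbL hbR (by positivity) (hP0 _)
  -- summing
  set Z := F.image j with hZ
  set Z₁ := Z.image Prod.fst with hZ1
  set Z₂ := Z.image Prod.snd with hZ2
  calc ∑ y ∈ F, Real.exp (-α * (EMetric.hausdorffEdist (x : Set ℤ) (y.1 : Set ℤ)).toReal)
      ≤ ∑ y ∈ F, P (j y).1 * P (j y).2 := Finset.sum_le_sum fun y _ => hpoint y
    _ = ∑ z ∈ Z, P z.1 * P z.2 := by
        rw [hZ, Finset.sum_image (fun y _ y' _ h => hjinj h)]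
    _ ≤ ∑ z ∈ Z₁ ×ˢ Z₂, P z.1 * P z.2 := by
        apply Finset.sum_le_sum_of_subset_of_nonneg
        · intro z hz
          rw [Finset.mem_product]
          exact ⟨Finset.mem_image_of_mem _ hz, Finset.mem_image_of_mem _ hz⟩
        · intro z _ _
          exact mul_nonneg (hP0 _) (hP0 _)
    _ = (∑ u ∈ Z₁, P u) * (∑ v ∈ Z₂, P v) := by
        rw [Finset.sum_mul_sum]
        rw [Finset.sum_product]
    _ ≤ ((N : ℝ) * S) ^ k * (((N : ℝ) * S) ^ k) := by
        apply mul_le_mul (hPsum Z₁) (hPsum Z₂)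
          (Finset.sum_nonneg fun v _ => hP0 v) (by positivity)
    _ = S ^ (2 * k) * (N : ℝ) ^ (2 * k) := by
        rw [← pow_add, mul_pow]
        have h2k : k + k = 2 * k := by omega
        rw [h2k]
        ring
end
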